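/- Let d ≥ 1, ν > 0, and for a = 0,1 let σ_a > 0, α_a > 0 be such that σ₀²/α₀^{2ν} = σ₁²/α₁^{2ν}. Then for d ≤ 3, ∫_{ℝ^d} (1+‖λ‖)^{4ν+2d} ( σ₀² M̂_{ν,α₀}(‖λ‖) − σ₁² M̂_{ν,α₁}(‖λ‖) )² dλ < ∞, where M̂_{ν,α}(z) = (Γ(ν+d/2)/(π^{d/2}Γ(ν))) α^d (1+α²z²)^{−ν−d/2}. -/

import Mathlib

set_option maxHeartbeats 1000000

open MeasureTheory

lemma aux_rpow_sub {s m a b : ℝ} (hs : 0 < s) (hm : 0 < m) (ha : m ≤ a) (hb : m ≤ b) :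
    |a ^ (-s) - b ^ (-s)| ≤ s * m ^ (-(s + 1)) * |a - b| := by
  have hder : ∀ x ∈ Set.Ici m, HasDerivAt (fun x : ℝ => x ^ (-s)) (-s * x ^ (-s - 1)) x := by
    intro x hx
    exact Real.hasDerivAt_rpow_const (Or.inl (ne_of_gt (lt_of_lt_of_le hm hx)))
  have key := Convex.norm_image_sub_le_of_norm_deriv_le (f := fun x : ℝ => x ^ (-s))
    (s := Set.Ici m) (C := s * m ^ (-(s + 1)))
    (fun x hx => (hder x hx).differentiableAt)
    (fun x hx => by
      rw [(hder x hx).deriv, norm_mul, Real.norm_eq_abs, Real.norm_eq_abs,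
        abs_of_nonpos (by linarith : -s ≤ 0),
        abs_of_nonneg (Real.rpow_nonneg (le_trans hm.le hx) _)]
      have : x ^ (-s - 1) ≤ m ^ (-(s + 1)) := by
        rw [show -s - 1 = -(s+1) by ring]
        exact Real.rpow_le_rpow_of_nonpos hm hx (by linarith)
      nlinarith [hs.le])
    (convex_Ici m) hb ha
  simpa [Real.norm_eq_abs, abs_sub_comm] using key

lemma aux_rewrite (d : ℕ) (ν : ℝ) (σ α z C : ℝ) (hα : 0 < α) :
    σ ^ 2 * (C * α ^ (d : ℕ) * (1 + α ^ 2 * z ^ 2) ^ (-ν - (d : ℝ) / 2)) =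
      C * (σ ^ 2 / α ^ (2 * ν)) * ((α ^ 2)⁻¹ + z ^ 2) ^ (-ν - (d : ℝ) / 2) := by
  have h1 : (1 : ℝ) + α ^ 2 * z ^ 2 = α ^ 2 * ((α ^ 2)⁻¹ + z ^ 2) := by
    field_simp
  have hx : (0:ℝ) ≤ (α^2)⁻¹ + z^2 := by positivity
  have h2 : (α : ℝ) ^ (d : ℕ) * (α ^ 2) ^ (-ν - (d : ℝ) / 2) = (α ^ (2 * ν))⁻¹ := by
    rw [← Real.rpow_natCast α d, ← Real.rpow_natCast α 2, ← Real.rpow_mul hα.le,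
      ← Real.rpow_add hα]
    have : (d:ℝ) + ((2:ℕ):ℝ) * (-ν - (d:ℝ)/2) = -(2*ν) := by push_cast; ring
    rw [this, Real.rpow_neg hα.le]
  rw [h1, Real.mul_rpow (by positivity) hx]
  linear_combination (σ ^ 2 * C * ((α ^ 2)⁻¹ + z ^ 2) ^ (-ν - (d : ℝ) / 2)) * h2

/-- If the microergodic parameters match, `σ₀²/α₀^{2ν} = σ₁²/α₁^{2ν}`, then for `d ≤ 3`
the weighted squared difference of the two Matérn spectral densities is integrable. -/
theorem stmt10 (d : ℕ) (hd1 : 1 ≤ d) (hd3 : d ≤ 3) (ν : ℝ) (hν : 0 < ν)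
    (σ₀ σ₁ α₀ α₁ : ℝ) (hσ₀ : 0 < σ₀) (hσ₁ : 0 < σ₁) (hα₀ : 0 < α₀) (hα₁ : 0 < α₁)
    (hmicro : σ₀ ^ 2 / α₀ ^ (2 * ν) = σ₁ ^ 2 / α₁ ^ (2 * ν)) :
    Integrable (fun lam : EuclideanSpace ℝ (Fin d) =>
      (1 + ‖lam‖) ^ (4 * ν + 2 * d) *
        (σ₀ ^ 2 * (Real.Gamma (ν + d / 2) / (Real.pi ^ ((d : ℝ) / 2) * Real.Gamma ν) *
            α₀ ^ (d : ℕ) * (1 + α₀ ^ 2 * ‖lam‖ ^ 2) ^ (-ν - d / 2)) -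
         σ₁ ^ 2 * (Real.Gamma (ν + d / 2) / (Real.pi ^ ((d : ℝ) / 2) * Real.Gamma ν) *
            α₁ ^ (d : ℕ) * (1 + α₁ ^ 2 * ‖lam‖ ^ 2) ^ (-ν - d / 2))) ^ 2) := by
  set C : ℝ := Real.Gamma (ν + d / 2) / (Real.pi ^ ((d : ℝ) / 2) * Real.Gamma ν) with hC
  set K : ℝ := σ₀ ^ 2 / α₀ ^ (2 * ν) with hK
  set t : ℝ := ν + (d : ℝ) / 2 with ht
  have ht0 : 0 < t := by
    have h : (0:ℝ) ≤ (d:ℝ)/2 := by positivity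
    rw [ht]; linarith
  set m : ℝ := min (α₀ ^ 2)⁻¹ (α₁ ^ 2)⁻¹ with hm
  have hm0 : 0 < m := lt_min (by positivity) (by positivity)
  set μ : ℝ := min m 1 with hμ
  have hμ0 : 0 < μ := lt_min hm0 one_pos
  set c : ℝ := |(α₀ ^ 2)⁻¹ - (α₁ ^ 2)⁻¹| with hc
  set B : ℝ := (C * K) ^ 2 * (t * c) ^ 2 * (μ / 2) ^ (-(2 * t + 2)) with hB
  have hB0 : 0 ≤ B := by positivity
  apply Integrable.mono' (g := fun lam : EuclideanSpace ℝ (Fin d) =>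
    B * (1 + ‖lam‖) ^ (-(4:ℝ)))
  · apply Integrable.const_mul
    apply integrable_one_add_norm (r := 4)
    rw [finrank_euclideanSpace_fin]
    exact_mod_cast (by omega : d < 4)
  · apply Continuous.aestronglyMeasurable
    have hb : Continuous fun lam : EuclideanSpace ℝ (Fin d) => 1 + ‖lam‖ :=
      continuous_const.add continuous_norm
    have hw : Continuous fun lam : EuclideanSpace ℝ (Fin d) =>
        (1 + ‖lam‖) ^ (4 * ν + 2 * (d:ℝ)) :=
      hb.rpow_const (fun x => Or.inl (by positivity))
    have h0 : Continuous fun lam : EuclideanSpace ℝ (Fin d) =>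
        (1 + α₀ ^ 2 * ‖lam‖ ^ 2) ^ (-ν - (d:ℝ) / 2) :=
      (continuous_const.add (continuous_const.mul (continuous_norm.pow 2))).rpow_const
        (fun x => Or.inl (by show (1:ℝ) + α₀ ^ 2 * ‖x‖ ^ 2 ≠ 0; positivity))
    have h1 : Continuous fun lam : EuclideanSpace ℝ (Fin d) =>
        (1 + α₁ ^ 2 * ‖lam‖ ^ 2) ^ (-ν - (d:ℝ) / 2) :=
      (continuous_const.add (continuous_const.mul (continuous_norm.pow 2))).rpow_const
        (fun x => Or.inl (by show (1:ℝ) + α₁ ^ 2 * ‖x‖ ^ 2 ≠ 0; positivity))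
    exact hw.mul (((continuous_const.mul (continuous_const.mul h0)).sub
      (continuous_const.mul (continuous_const.mul h1))).pow 2)
  · filter_upwards [] with lam
    set z : ℝ := ‖lam‖ with hzdef
    have hz : 0 ≤ z := norm_nonneg _
    have h1z : 0 < 1 + z := by linarith
    set A₀ : ℝ := ((α₀ ^ 2)⁻¹ + z ^ 2) ^ (-ν - (d : ℝ) / 2) with hA₀
    set A₁ : ℝ := ((α₁ ^ 2)⁻¹ + z ^ 2) ^ (-ν - (d : ℝ) / 2) with hA₁
    have hre : σ₀ ^ 2 * (C * α₀ ^ (d : ℕ) * (1 + α₀ ^ 2 * z ^ 2) ^ (-ν - (d:ℝ) / 2)) -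
        σ₁ ^ 2 * (C * α₁ ^ (d : ℕ) * (1 + α₁ ^ 2 * z ^ 2) ^ (-ν - (d:ℝ) / 2)) =
        C * K * (A₀ - A₁) := by
      rw [aux_rewrite d ν σ₀ α₀ z C hα₀, aux_rewrite d ν σ₁ α₁ z C hα₁, ← hmicro]
      ring
    -- bound on |A₀ - A₁|
    have hmz : 0 < m + z ^ 2 := by positivity
    have het : -ν - (d : ℝ) / 2 = -t := by rw [ht]; ring
    have habs : |A₀ - A₁| ≤ t * (m + z ^ 2) ^ (-(t + 1)) * c := by
      have h0 : m + z ^ 2 ≤ (α₀ ^ 2)⁻¹ + z ^ 2 := by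
        have := min_le_left (α₀ ^ 2)⁻¹ (α₁ ^ 2)⁻¹; linarith
      have h1 : m + z ^ 2 ≤ (α₁ ^ 2)⁻¹ + z ^ 2 := by
        have := min_le_right (α₀ ^ 2)⁻¹ (α₁ ^ 2)⁻¹; linarith
      have key := aux_rpow_sub (s := t) (m := m + z ^ 2) ht0 hmz h0 h1
      rw [hA₀, hA₁, het]
      have harg : ((α₀ ^ 2)⁻¹ + z ^ 2) - ((α₁ ^ 2)⁻¹ + z ^ 2) = (α₀ ^ 2)⁻¹ - (α₁ ^ 2)⁻¹ := by
        ring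
      rw [harg] at key
      exact key
    -- compare (m+z²) with (μ/2)(1+z)²
    have hcmp : (μ / 2) * (1 + z) ^ 2 ≤ m + z ^ 2 := by
      have hμm : μ ≤ m := min_le_left _ _
      have hμ1 : μ ≤ 1 := min_le_right _ _
      nlinarith [mul_nonneg hμ0.le (sq_nonneg (1 - z)),
        mul_nonneg (by linarith : (0:ℝ) ≤ 1 - μ) (sq_nonneg z)]
    have hstep3 : (m + z ^ 2) ^ (-(2 * t + 2)) ≤
        (μ / 2) ^ (-(2 * t + 2)) * (1 + z) ^ (-(4 * t + 4)) := by
      have h1 : (m + z ^ 2) ^ (-(2 * t + 2)) ≤ ((μ / 2) * (1 + z) ^ 2) ^ (-(2 * t + 2)) :=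
        Real.rpow_le_rpow_of_nonpos (by positivity) hcmp (by linarith)
      have h2 : ((μ / 2) * (1 + z) ^ 2) ^ (-(2 * t + 2)) =
          (μ / 2) ^ (-(2 * t + 2)) * (1 + z) ^ (-(4 * t + 4)) := by
        rw [Real.mul_rpow (by positivity) (by positivity),
          ← Real.rpow_natCast (1 + z) 2, ← Real.rpow_mul h1z.le]
        congr 1
        push_cast; ring
      linarith [h1, h2.le, h2.ge]
    -- main pointwise estimate
    have hsq : (A₀ - A₁) ^ 2 ≤ (t * c) ^ 2 * (m + z ^ 2) ^ (-(2 * t + 2)) := by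
      have h2 : (A₀ - A₁) ^ 2 ≤ (t * (m + z ^ 2) ^ (-(t + 1)) * c) ^ 2 := by
        rw [← sq_abs (A₀ - A₁)]
        exact pow_le_pow_left₀ (abs_nonneg _) habs 2
      have h3 : ((m + z ^ 2) ^ (-(t + 1))) ^ 2 = (m + z ^ 2) ^ (-(2 * t + 2)) := by
        rw [← Real.rpow_natCast ((m + z ^ 2) ^ (-(t + 1))) 2, ← Real.rpow_mul hmz.le]
        congr 1
        push_cast; ring
      calc (A₀ - A₁) ^ 2 ≤ (t * (m + z ^ 2) ^ (-(t + 1)) * c) ^ 2 := h2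
        _ = (t * c) ^ 2 * ((m + z ^ 2) ^ (-(t + 1))) ^ 2 := by ring
        _ = (t * c) ^ 2 * (m + z ^ 2) ^ (-(2 * t + 2)) := by rw [h3]
    have hpow : (1 + z) ^ (4 * ν + 2 * (d:ℝ)) * (1 + z) ^ (-(4 * t + 4)) = (1 + z) ^ (-(4:ℝ)) := by
      rw [← Real.rpow_add h1z]
      congr 1
      rw [ht]; ring
    have hw : 0 ≤ (1 + z) ^ (4 * ν + 2 * (d:ℝ)) := by positivity
    rw [Real.norm_eq_abs, hre, abs_of_nonneg (by positivity)]
    calc (1 + z) ^ (4 * ν + 2 * (d:ℝ)) * (C * K * (A₀ - A₁)) ^ 2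
        = (1 + z) ^ (4 * ν + 2 * (d:ℝ)) * ((C * K) ^ 2 * (A₀ - A₁) ^ 2) := by ring
      _ ≤ (1 + z) ^ (4 * ν + 2 * (d:ℝ)) *
            ((C * K) ^ 2 * ((t * c) ^ 2 * (m + z ^ 2) ^ (-(2 * t + 2)))) := by
          gcongr
      _ ≤ (1 + z) ^ (4 * ν + 2 * (d:ℝ)) *
            ((C * K) ^ 2 * ((t * c) ^ 2 *
              ((μ / 2) ^ (-(2 * t + 2)) * (1 + z) ^ (-(4 * t + 4))))) := by
          gcongr
      _ = B * ((1 + z) ^ (4 * ν + 2 * (d:ℝ)) * (1 + z) ^ (-(4 * t + 4))) := by rw [hB]; ring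
      _ = B * (1 + z) ^ (-(4:ℝ)) := by rw [hpow]
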